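/- For the model autocorrelation ρ̂(k) = ∑_{i=1}^m A_i·τ_i^k with 0 ≤ τ_i < 1 and ∑ A_i = 1, the quantity s·ε̂_s², where ε̂_s² = (σ̂²/s)·[1 + 2·∑_{k=1}^{s−1}(1 − k/s)·ρ̂(k)], converges as s → ∞ to the finite limit Q̂ = σ̂²·[1 + 2·∑_{i=1}^m A_i·τ_i/(1 − τ_i)]. -/

import Mathlib

open Filter Finset

lemma aux_single (τ : ℝ) (h0 : 0 ≤ τ) (h1 : τ < 1) :
    Tendsto (fun s : ℕ => ∑ k ∈ Finset.Icc 1 (s - 1), (1 - (k : ℝ) / s) * τ ^ k)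
      atTop (nhds (τ / (1 - τ))) := by
  have hIcc : ∀ s : ℕ, Finset.Icc 1 (s - 1) = Finset.Ico 1 s := by
    intro s; ext k; simp only [Finset.mem_Icc, Finset.mem_Ico]; omega
  have habs : |τ| < 1 := by rw [abs_of_nonneg h0]; exact h1
  -- T1 : geometric part
  have hg : HasSum (fun k : ℕ => τ ^ k) (1 - τ)⁻¹ := hasSum_geometric_of_lt_one h0 h1
  have T1 : Tendsto (fun s : ℕ => ∑ k ∈ Finset.Ico 1 s, τ ^ k) atTop
      (nhds ((1 - τ)⁻¹ - 1)) := by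
    have h := (hg.tendsto_sum_nat.sub_const 1)
    refine h.congr' ?_
    filter_upwards [eventually_ge_atTop 1] with s hs
    rw [Finset.sum_Ico_eq_sub _ hs]
    simp
  -- T2 : k * τ^k part
  have hk : HasSum (fun k : ℕ => (k : ℝ) * τ ^ k) (τ / (1 - τ) ^ 2) :=
    hasSum_coe_mul_geometric_of_norm_lt_one habs
  have T2 : Tendsto (fun s : ℕ => (1 / (s : ℝ)) * ∑ k ∈ Finset.Ico 1 s, (k : ℝ) * τ ^ k)
      atTop (nhds 0) := by
    have hsum : Tendsto (fun s : ℕ => ∑ k ∈ Finset.Ico 1 s, (k : ℝ) * τ ^ k) atTop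
        (nhds (τ / (1 - τ) ^ 2)) := by
      refine hk.tendsto_sum_nat.congr' ?_
      filter_upwards [eventually_ge_atTop 1] with s hs
      rw [Finset.sum_Ico_eq_sub _ hs]
      simp
    have h0' : Tendsto (fun s : ℕ => 1 / (s : ℝ)) atTop (nhds 0) :=
      tendsto_one_div_atTop_nhds_zero_nat
    simpa using h0'.mul hsum
  have key : Tendsto (fun s : ℕ => (∑ k ∈ Finset.Ico 1 s, τ ^ k)
      - (1 / (s : ℝ)) * ∑ k ∈ Finset.Ico 1 s, (k : ℝ) * τ ^ k) atTop
      (nhds ((1 - τ)⁻¹ - 1 - 0)) := T1.sub T2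
  have hlim : (1 - τ)⁻¹ - 1 - 0 = τ / (1 - τ) := by
    have h1τ : (1 : ℝ) - τ ≠ 0 := by linarith
    field_simp
    ring
  rw [hlim] at key
  refine key.congr ?_
  intro s
  rw [hIcc, Finset.mul_sum, ← Finset.sum_sub_distrib]
  refine Finset.sum_congr rfl fun k _ => ?_
  ring

theorem stmt4
    (σh : ℝ) (hσh : 0 ≤ σh) (m : ℕ) (hm : 1 ≤ m) (A τ : Fin m → ℝ)
    (hA : ∑ i, A i = 1) (hτ : ∀ i, 0 ≤ τ i ∧ τ i < 1) :
    Tendsto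
      (fun s : ℕ => (s : ℝ) *
        (σh ^ 2 / s * (1 + 2 * ∑ k ∈ Finset.Icc 1 (s - 1),
          (1 - (k : ℝ) / s) * (∑ i, A i * τ i ^ k))))
      atTop (nhds (σh ^ 2 * (1 + 2 * ∑ i, A i * (τ i / (1 - τ i))))) := by
  have hsum : Tendsto (fun s : ℕ => ∑ i, A i * ∑ k ∈ Finset.Icc 1 (s - 1),
      (1 - (k : ℝ) / s) * τ i ^ k) atTop (nhds (∑ i, A i * (τ i / (1 - τ i)))) := by
    refine tendsto_finset_sum _ fun i _ => ?_
    exact (aux_single (τ i) (hτ i).1 (hτ i).2).const_mul (A i)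
  have hmain : Tendsto (fun s : ℕ => σh ^ 2 * (1 + 2 * ∑ i, A i *
      ∑ k ∈ Finset.Icc 1 (s - 1), (1 - (k : ℝ) / s) * τ i ^ k)) atTop
      (nhds (σh ^ 2 * (1 + 2 * ∑ i, A i * (τ i / (1 - τ i))))) := by
    exact (((hsum.const_mul 2).const_add 1).const_mul (σh ^ 2))
  refine hmain.congr' ?_
  filter_upwards [eventually_ge_atTop 1] with s hs
  have hs0 : (s : ℝ) ≠ 0 := Nat.cast_ne_zero.mpr (by omega)
  have hswap : ∑ k ∈ Finset.Icc 1 (s - 1), (1 - (k : ℝ) / s) * (∑ i, A i * τ i ^ k)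
      = ∑ i, A i * ∑ k ∈ Finset.Icc 1 (s - 1), (1 - (k : ℝ) / s) * τ i ^ k := by
    simp_rw [Finset.mul_sum]
    rw [Finset.sum_comm]
    exact Finset.sum_congr rfl fun i _ => Finset.sum_congr rfl fun k _ => by ring
  rw [← hswap]
  field_simp
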